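/- Let H be a finite-dimensional Hopf algebra with bijective antipode S and a faithful left integral φ (faithful meaning a·φ = 0 implies a = 0 and φ·a = 0 implies a = 0). Define ψ̂ : H* → k by ψ̂(a·φ) := ε(a). Then for all a, b ∈ H, ψ̂ of the convolution product (a·φ)(b·φ) equals φ(S⁻¹(b)a), where the convolution product in H* is (υω)(c) = Σ υ(c₍₁₎)ω(c₍₂₎) and (a·φ)(c) = φ(ca). -/

import Mathlib

open TensorProduct

/-- The convolution product of two functionals on a coalgebra:
`(υω)(c) = Σ υ(c₍₁₎) ω(c₍₂₎)`. -/
noncomputable def convF (k H : Type*) [CommRing k] [AddCommGroup H] [Module k H]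
    [Coalgebra k H] (υ ω : H →ₗ[k] k) : H →ₗ[k] k :=
  (TensorProduct.lid k k).toLinearMap ∘ₗ (TensorProduct.map υ ω) ∘ₗ Coalgebra.comul

section aux
open Coalgebra HopfAlgebra
variable {k H : Type*} [CommRing k] [Ring H] [HopfAlgebra k H]

lemma antipode_one' : HopfAlgebra.antipode (R := k) (1 : H) = 1 := by
  have h := HopfAlgebra.mul_antipode_rTensor_comul_apply (R := k) (1 : H)
  simpa [Bialgebra.comul_one, Algebra.TensorProduct.one_def] using h


lemma sumA {ι : Type*} (u : H) (ru : Coalgebra.Repr k u ι) :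
    ∑ i ∈ ru.index, counit (R := k) (ru.right i) • ru.left i = u := by
  have h := congrArg (TensorProduct.rid k H) (Coalgebra.sum_tmul_counit_eq (R := k) ru)
  simp only [map_sum, TensorProduct.rid_tmul, one_smul] at h
  exact h

lemma sumB {ι : Type*} (u : H) (ru : Coalgebra.Repr k u ι) :
    ∑ i ∈ ru.index, counit (R := k) (ru.left i) • ru.right i = u := by
  have h := congrArg (TensorProduct.lid k H) (Coalgebra.sum_counit_tmul_eq (R := k) ru)
  simp only [map_sum, TensorProduct.lid_tmul, one_smul] at h
  exact h

noncomputable def mulRepr {ι κ : Type*} (x y : H) (cx : Coalgebra.Repr k x ι)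
    (dy : Coalgebra.Repr k y κ) :
    Coalgebra.Repr k (x * y) (ι × κ) where
  index := cx.index ×ˢ dy.index
  left := fun p => cx.left p.1 * dy.left p.2
  right := fun p => cx.right p.1 * dy.right p.2
  eq := by
    rw [Finset.sum_product, Bialgebra.comul_mul, ← cx.eq, ← dy.eq, Finset.sum_mul_sum]
    simp [Algebra.TensorProduct.tmul_mul_tmul]

lemma eps_mul_expand {ι κ : Type*} (x y : H) (cx : Coalgebra.Repr k x ι)
    (dy : Coalgebra.Repr k y κ) :
    (counit (R := k) (x * y)) • (1 : H) =
      ∑ p ∈ cx.index, ∑ q ∈ dy.index,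
        (cx.left p * dy.left q) *
          HopfAlgebra.antipode (R := k) (cx.right p * dy.right q) := by
  have h := sum_mul_antipode_eq_smul (R := k) (mulRepr x y cx dy)
  rw [← h, mulRepr, Finset.sum_product]

lemma collapseR {ι κ : Type*} (u : H) (ru : Coalgebra.Repr k u ι)
    (c : ∀ i, Coalgebra.Repr k (ru.right i) κ)
    {M : Type*} [AddCommGroup M] [Module k M] (F : H ⊗[k] H →ₗ[k] M) :
    ∑ i ∈ ru.index, ∑ p ∈ (c i).index,
      F ((HopfAlgebra.antipode (R := k) (ru.left i) * (c i).left p) ⊗ₜ (c i).right p)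
      = F ((1 : H) ⊗ₜ u) := by
  classical
  set a₁ : ∀ i, Coalgebra.Repr k (ru.left i) (H × H) := fun i => Coalgebra.Repr.arbitrary k _
  have key := Coalgebra.sum_tmul_tmul_eq (R := k) ru a₁ c
  set Φ : H ⊗[k] (H ⊗[k] H) →ₗ[k] M :=
    F ∘ₗ (LinearMap.rTensor H
        (LinearMap.mul' k H ∘ₗ (LinearMap.rTensor H (HopfAlgebra.antipode (R := k)))))
      ∘ₗ (TensorProduct.assoc k H H H).symm.toLinearMap with hΦ
  have hΦapp : ∀ (x y z : H), Φ (x ⊗ₜ (y ⊗ₜ z)) =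
      F ((HopfAlgebra.antipode (R := k) x * y) ⊗ₜ z) := by
    intro x y z
    simp [hΦ, TensorProduct.assoc_symm_tmul]
  have key2 := congrArg Φ key
  simp only [map_sum, hΦapp] at key2
  rw [← key2]
  have h1 : ∀ i ∈ ru.index, ∑ j ∈ (a₁ i).index,
      F ((HopfAlgebra.antipode (R := k) ((a₁ i).left j) * (a₁ i).right j) ⊗ₜ ru.right i)
      = counit (R := k) (ru.left i) • F ((1 : H) ⊗ₜ ru.right i) := by
    intro i _
    have hs := sum_antipode_mul_eq_smul (R := k) (a₁ i)
    calc ∑ j ∈ (a₁ i).index,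
        F ((HopfAlgebra.antipode (R := k) ((a₁ i).left j) * (a₁ i).right j) ⊗ₜ ru.right i)
        = F ((∑ j ∈ (a₁ i).index,
            HopfAlgebra.antipode (R := k) ((a₁ i).left j) * (a₁ i).right j) ⊗ₜ ru.right i) := by
          rw [TensorProduct.sum_tmul, map_sum]
      _ = counit (R := k) (ru.left i) • F ((1 : H) ⊗ₜ ru.right i) := by
          rw [hs, ← TensorProduct.smul_tmul', map_smul]
  rw [Finset.sum_congr rfl h1]
  have h2 : ∑ i ∈ ru.index, counit (R := k) (ru.left i) • F ((1 : H) ⊗ₜ ru.right i)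
      = F ((1 : H) ⊗ₜ ∑ i ∈ ru.index, counit (R := k) (ru.left i) • ru.right i) := by
    rw [TensorProduct.tmul_sum, map_sum]
    congr 1
    ext i
    rw [TensorProduct.tmul_smul, map_smul]
  rw [h2, sumB u ru]

lemma antipode_mul_anti (u v : H) :
    HopfAlgebra.antipode (R := k) (u * v) =
      HopfAlgebra.antipode (R := k) v * HopfAlgebra.antipode (R := k) u := by
  classical
  set S : H →ₗ[k] H := HopfAlgebra.antipode (R := k) with hSdef
  set ru : Coalgebra.Repr k u (H × H) := Coalgebra.Repr.arbitrary k u with hru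
  set rv : Coalgebra.Repr k v (H × H) := Coalgebra.Repr.arbitrary k v with hrv
  set c : ∀ i, Coalgebra.Repr k (ru.right i) (H × H) := fun i => Coalgebra.Repr.arbitrary k _ with hc
  set d : ∀ j, Coalgebra.Repr k (rv.right j) (H × H) := fun j => Coalgebra.Repr.arbitrary k _ with hd
  -- step 1
  have h1 : S v * S u
      = ∑ j ∈ rv.index, ∑ i ∈ ru.index,
          (counit (R := k) (rv.right j) * counit (R := k) (ru.right i)) •
            (S (rv.left j) * S (ru.left i)) := by
    conv_lhs => rw [← sumA u ru, ← sumA v rv]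
    rw [map_sum, map_sum, Finset.sum_mul_sum]
    refine Finset.sum_congr rfl fun j _ => Finset.sum_congr rfl fun i _ => ?_
    simp only [map_smul, smul_mul_assoc, mul_smul_comm, smul_smul, mul_comm]
  -- step 2
  have h2 : ∀ j i, (counit (R := k) (rv.right j) * counit (R := k) (ru.right i)) •
        (S (rv.left j) * S (ru.left i))
      = ∑ p ∈ (c i).index, ∑ q ∈ (d j).index,
          (S (rv.left j) * S (ru.left i)) *
            (((c i).left p * (d j).left q) * S ((c i).right p * (d j).right q)) := by
    intro j i
    have he := eps_mul_expand (ru.right i) (rv.right j) (c i) (d j)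
    calc (counit (R := k) (rv.right j) * counit (R := k) (ru.right i)) •
          (S (rv.left j) * S (ru.left i))
        = (S (rv.left j) * S (ru.left i)) *
            ((counit (R := k) (ru.right i * rv.right j)) • (1 : H)) := by
          rw [Bialgebra.counit_mul, mul_smul_comm, mul_one, mul_comm]
      _ = ∑ p ∈ (c i).index, ∑ q ∈ (d j).index,
            (S (rv.left j) * S (ru.left i)) *
              (((c i).left p * (d j).left q) * S ((c i).right p * (d j).right q)) := by
          rw [he, Finset.mul_sum]
          exact Finset.sum_congr rfl fun p _ => by rw [Finset.mul_sum]
  -- the inner collapse maps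
  set F : ∀ (j : H × H), H × H → (H ⊗[k] H →ₗ[k] H) := fun j q =>
    LinearMap.mulLeft k (S (rv.left j)) ∘ₗ LinearMap.mul' k H ∘ₗ
      LinearMap.lTensor H
        (LinearMap.mulLeft k ((d j).left q) ∘ₗ S ∘ₗ LinearMap.mulRight k ((d j).right q))
    with hF
  have hFapp : ∀ j q (y z : H), F j q (y ⊗ₜ z)
      = S (rv.left j) * (y * ((d j).left q * S (z * (d j).right q))) := by
    intro j q y z
    simp [hF]
  set G : H ⊗[k] H →ₗ[k] H :=
    LinearMap.mul' k H ∘ₗ LinearMap.lTensor H (S ∘ₗ LinearMap.mulLeft k u) with hG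
  have hGapp : ∀ (y z : H), G (y ⊗ₜ z) = y * S (u * z) := by
    intro y z
    simp [hG]
  calc S (u * v) = G ((1 : H) ⊗ₜ v) := by rw [hGapp, one_mul]
    _ = ∑ j ∈ rv.index, ∑ q ∈ (d j).index,
          G ((S (rv.left j) * (d j).left q) ⊗ₜ (d j).right q) := (collapseR v rv d G).symm
    _ = ∑ j ∈ rv.index, ∑ q ∈ (d j).index,
          F j q ((1 : H) ⊗ₜ u) := by
        refine Finset.sum_congr rfl fun j _ => Finset.sum_congr rfl fun q _ => ?_
        rw [hGapp, hFapp, one_mul]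
        simp only [mul_assoc]
    _ = ∑ j ∈ rv.index, ∑ q ∈ (d j).index, ∑ i ∈ ru.index, ∑ p ∈ (c i).index,
          F j q ((S (ru.left i) * (c i).left p) ⊗ₜ (c i).right p) := by
        refine Finset.sum_congr rfl fun j _ => Finset.sum_congr rfl fun q _ => ?_
        exact (collapseR u ru c (F j q)).symm
    _ = ∑ j ∈ rv.index, ∑ i ∈ ru.index, ∑ p ∈ (c i).index, ∑ q ∈ (d j).index,
          (S (rv.left j) * S (ru.left i)) *
            (((c i).left p * (d j).left q) * S ((c i).right p * (d j).right q)) := by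
        refine Finset.sum_congr rfl fun j _ => ?_
        rw [Finset.sum_comm]
        refine Finset.sum_congr rfl fun i _ => ?_
        rw [Finset.sum_comm]
        refine Finset.sum_congr rfl fun p _ => Finset.sum_congr rfl fun q _ => ?_
        rw [hFapp]
        simp only [mul_assoc]
    _ = ∑ j ∈ rv.index, ∑ i ∈ ru.index,
          (counit (R := k) (rv.right j) * counit (R := k) (ru.right i)) •
            (S (rv.left j) * S (ru.left i)) := by
        refine Finset.sum_congr rfl fun j _ => Finset.sum_congr rfl fun i _ => (h2 j i).symm
    _ = S v * S u := h1.symm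

end aux

set_option maxHeartbeats 2000000
set_option synthInstance.maxHeartbeats 100000

/-- For a finite-dimensional Hopf algebra with bijective antipode and faithful left
integral `φ`, the functional `ψ̂` with `ψ̂(a·φ) = ε(a)` satisfies
`ψ̂((a·φ)(b·φ)) = φ(S⁻¹(b) a)`. -/
theorem stmt_10 (k H : Type*) [Field k] [Ring H] [HopfAlgebra k H] [FiniteDimensional k H]
    (Sinv : H →ₗ[k] H)
    (hS1 : ∀ x : H, HopfAlgebra.antipode (R := k) (Sinv x) = x)
    (hS2 : ∀ x : H, Sinv (HopfAlgebra.antipode (R := k) x) = x)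
    (φ : H →ₗ[k] k)
    (hint : ∀ a : H,
      (TensorProduct.rid k H) (LinearMap.lTensor H φ (Coalgebra.comul a)) = φ a • (1 : H))
    (hfaith1 : ∀ a : H, φ ∘ₗ LinearMap.mulRight k a = 0 → a = 0)
    (hfaith2 : ∀ a : H, φ ∘ₗ LinearMap.mulLeft k a = 0 → a = 0)
    (ψhat : Module.Dual k (Module.Dual k H))
    (hψhat : ∀ a : H, ψhat (φ ∘ₗ LinearMap.mulRight k a) = Coalgebra.counit (R := k) a) :
    ∀ a b : H,
      ψhat (convF k H (φ ∘ₗ LinearMap.mulRight k a) (φ ∘ₗ LinearMap.mulRight k b))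
        = φ (Sinv b * a) := by
  intro a b
  have Sinv_one : Sinv (1 : H) = 1 := by
    have h := hS2 1
    rwa [antipode_one'] at h
  have Sinv_anti : ∀ x y : H, Sinv (x * y) = Sinv y * Sinv x := by
    intro x y
    have hxy : x * y = HopfAlgebra.antipode (R := k) (Sinv y * Sinv x) := by
      rw [antipode_mul_anti, hS1, hS1]
    rw [hxy, hS2]
  set μ : H ⊗[k] H →ₗ[k] H := LinearMap.mul' k H with hμ
  set P : H ⊗[k] H →ₗ[k] H :=
    μ ∘ₗ (TensorProduct.comm k H H).toLinearMap ∘ₗ (Sinv.rTensor H) with hPdef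
  have hPtmul : ∀ x y : H, P (x ⊗ₜ y) = y * Sinv x := by
    intro x y; simp [hPdef, hμ]
  have hPcomul : ∀ z : H, P (Coalgebra.comul z) = algebraMap k H (Coalgebra.counit (R := k) z) := by
    intro z
    have hcomp : P = Sinv ∘ₗ μ ∘ₗ ((HopfAlgebra.antipode (R := k)).lTensor H) := by
      apply TensorProduct.ext'
      intro x y
      simp [hPdef, hμ, Sinv_anti, hS2]
    rw [hcomp]
    simp only [LinearMap.comp_apply]
    rw [hμ, HopfAlgebra.mul_antipode_lTensor_comul_apply,
      Algebra.algebraMap_eq_smul_one, map_smul, Sinv_one]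
  -- the W' map
  set W : H ⊗[k] H →ₗ[k] H ⊗[k] H :=
    LinearMap.mul' k (H ⊗[k] H) ∘ₗ
      TensorProduct.map Coalgebra.comul (((TensorProduct.mk k H H).flip 1) ∘ₗ Sinv) ∘ₗ
        (TensorProduct.comm k H H).toLinearMap with hWdef
  have hWtmul : ∀ x y : H, W (x ⊗ₜ y) = Coalgebra.comul y * (Sinv x ⊗ₜ (1 : H)) := by
    intro x y; simp [hWdef]
  have Wkey : ∀ z : H, W (Coalgebra.comul z) = (1 : H) ⊗ₜ z := by
    intro z
    have hcomp : W = (P.rTensor H) ∘ₗ (TensorProduct.assoc k H H H).symm.toLinearMap ∘ₗ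
        (Coalgebra.comul.lTensor H) := by
      apply TensorProduct.ext'
      intro x y
      simp only [LinearMap.comp_apply, LinearEquiv.coe_coe, LinearMap.lTensor_tmul]
      rw [hWtmul]
      induction Coalgebra.comul (R := k) y using TensorProduct.induction_on with
      | zero => rw [zero_mul, TensorProduct.tmul_zero, map_zero, map_zero]
      | tmul y1 y2 =>
          rw [Algebra.TensorProduct.tmul_mul_tmul, TensorProduct.assoc_symm_tmul,
            LinearMap.rTensor_tmul, hPtmul, mul_one]
      | add t1 t2 ih1 ih2 =>
          rw [add_mul, ih1, ih2, TensorProduct.tmul_add, map_add, map_add]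
    rw [hcomp]
    simp only [LinearMap.comp_apply, LinearEquiv.coe_coe]
    rw [Coalgebra.coassoc_symm_apply, ← LinearMap.rTensor_comp_apply]
    have hPc : P ∘ₗ Coalgebra.comul =
        (Algebra.linearMap k H) ∘ₗ Coalgebra.counit := by
      apply LinearMap.ext; intro z
      simp [hPcomul]
    rw [hPc, LinearMap.rTensor_comp_apply, Coalgebra.rTensor_counit_comul]
    simp
  -- integral lemma
  have Hu : ∀ z w : H,
      (TensorProduct.rid k H) (LinearMap.lTensor H φ (Coalgebra.comul z * (w ⊗ₜ (1 : H))))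
        = φ z • w := by
    intro z w
    have hstep : ∀ t : H ⊗[k] H,
        (TensorProduct.rid k H) (LinearMap.lTensor H φ (t * (w ⊗ₜ (1 : H))))
          = (TensorProduct.rid k H) (LinearMap.lTensor H φ t) * w := by
      intro t
      induction t using TensorProduct.induction_on with
      | zero => simp
      | tmul x y => simp [Algebra.TensorProduct.tmul_mul_tmul, smul_mul_assoc]
      | add t1 t2 ih1 ih2 => rw [add_mul, map_add, map_add, ih1, ih2, map_add, map_add, add_mul]
    rw [hstep, hint z, smul_mul_assoc, one_mul]
  -- the dual-valued map D
  set g : H →ₗ[k] Module.Dual k H :=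
    (LinearMap.llcomp k H H k φ) ∘ₗ (LinearMap.mul k H).flip with hgdef
  have hgapp : ∀ y : H, g y = φ ∘ₗ LinearMap.mulRight k y := by
    intro y; apply LinearMap.ext; intro x
    simp [hgdef]
  set D : H ⊗[k] H →ₗ[k] Module.Dual k H :=
    (TensorProduct.lid k (Module.Dual k H)).toLinearMap ∘ₗ
      TensorProduct.map (φ ∘ₗ LinearMap.mulRight k a ∘ₗ Sinv) g with hDdef
  have hDtmul : ∀ x y : H,
      D (x ⊗ₜ y) = φ (Sinv x * a) • (φ ∘ₗ LinearMap.mulRight k y) := by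
    intro x y
    simp [hDdef, hgapp]
  -- key identity
  have key : convF k H (φ ∘ₗ LinearMap.mulRight k a) (φ ∘ₗ LinearMap.mulRight k b)
      = D (Coalgebra.comul b) := by
    apply LinearMap.ext; intro cc
    have e1 : ∀ t : H ⊗[k] H,
        (TensorProduct.lid k k)
          (TensorProduct.map (φ ∘ₗ LinearMap.mulRight k a) (φ ∘ₗ LinearMap.mulRight k b) t)
        = φ ((TensorProduct.rid k H)
            (LinearMap.lTensor H (φ ∘ₗ LinearMap.mulRight k b) t) * a) := by
      intro t
      induction t using TensorProduct.induction_on with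
      | zero => simp
      | tmul x y => simp [smul_mul_assoc, mul_comm]
      | add t1 t2 ih1 ih2 =>
          rw [map_add, map_add, ih1, ih2, map_add, map_add, add_mul, map_add]
    have e2 : ∀ t : H ⊗[k] H,
        LinearMap.lTensor H (φ ∘ₗ LinearMap.mulRight k b) t
          = LinearMap.lTensor H φ (t * ((1 : H) ⊗ₜ b)) := by
      intro t
      induction t using TensorProduct.induction_on with
      | zero => simp
      | tmul x y => simp [Algebra.TensorProduct.tmul_mul_tmul]
      | add t1 t2 ih1 ih2 => rw [map_add, ih1, ih2, add_mul, map_add]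
    have e4 : ∀ t : H ⊗[k] H,
        φ ((TensorProduct.rid k H)
            (LinearMap.lTensor H φ (Coalgebra.comul cc * W t)) * a) = D t cc := by
      intro t
      induction t using TensorProduct.induction_on with
      | zero => simp
      | tmul x y =>
          rw [hWtmul, hDtmul, ← mul_assoc, ← Bialgebra.comul_mul, Hu (cc * y) (Sinv x)]
          simp [smul_mul_assoc, mul_comm]
      | add t1 t2 ih1 ih2 =>
          rw [map_add, mul_add, map_add, map_add, add_mul, map_add, ih1, ih2, map_add,
            LinearMap.add_apply]
    calc convF k H (φ ∘ₗ LinearMap.mulRight k a) (φ ∘ₗ LinearMap.mulRight k b) cc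
        = (TensorProduct.lid k k)
            (TensorProduct.map (φ ∘ₗ LinearMap.mulRight k a) (φ ∘ₗ LinearMap.mulRight k b)
              (Coalgebra.comul cc)) := by simp [convF]
      _ = φ ((TensorProduct.rid k H)
            (LinearMap.lTensor H φ (Coalgebra.comul cc * ((1 : H) ⊗ₜ b))) * a) := by
          rw [e1, e2]
      _ = φ ((TensorProduct.rid k H)
            (LinearMap.lTensor H φ (Coalgebra.comul cc * W (Coalgebra.comul b))) * a) := by
          rw [Wkey]
      _ = D (Coalgebra.comul b) cc := e4 (Coalgebra.comul b)
  -- conclude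
  have e5 : ∀ t : H ⊗[k] H,
      ψhat (D t)
        = φ (Sinv ((TensorProduct.rid k H)
            (LinearMap.lTensor H (Coalgebra.counit (R := k)) t)) * a) := by
    intro t
    induction t using TensorProduct.induction_on with
    | zero => simp
    | tmul x y =>
        rw [hDtmul, map_smul, hψhat]
        simp [smul_mul_assoc, mul_comm]
    | add t1 t2 ih1 ih2 =>
        rw [map_add, map_add, ih1, ih2, map_add, map_add, map_add, add_mul, map_add]
  rw [key, e5 (Coalgebra.comul b), Coalgebra.lTensor_counit_comul]
  simp
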